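/- Let n be a positive natural number, let M be the n×n real matrix whose entry in row j and column l (1 ≤ j, l ≤ n) equals min(j,l) if l ≤ n-1 and j/2 if l = n, and let v be the vector in ℝ^n with j-th entry sin(jπ/(2n)) for 1 ≤ j ≤ n (so the n-th entry is 1). Then M·v = μ·v, where μ = 1/(4·sin²(π/(4n))). -/

import Mathlib

open Finset

theorem buergi_sine_eigenvector (n : ℕ) (hn : 0 < n)
    (M : Matrix (Fin n) (Fin n) ℝ)
    (hM : ∀ j l : Fin n, M j l =
      if (l : ℕ) + 1 ≤ n - 1 then (min ((j : ℕ) + 1) ((l : ℕ) + 1) : ℝ)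
      else ((j : ℕ) + 1 : ℝ) / 2)
    (v : Fin n → ℝ)
    (hv : ∀ j : Fin n, v j = Real.sin ((((j : ℕ) + 1 : ℕ) : ℝ) * Real.pi / (2 * n))) :
    M.mulVec v = (1 / (4 * (Real.sin (Real.pi / (4 * n))) ^ 2)) • v := by
  have hπ := Real.pi_pos
  have hn' : (0:ℝ) < n := by exact_mod_cast hn
  have hn1 : (1:ℝ) ≤ n := by exact_mod_cast hn
  set θ : ℝ := Real.pi / (2 * n) with hθdef
  set s : ℝ := Real.sin (Real.pi / (4 * n)) with hsdef
  have hs_pos : 0 < s := by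
    apply Real.sin_pos_of_pos_of_lt_pi (by positivity)
    rw [div_lt_iff₀ (by positivity)]
    nlinarith
  have hs_ne : s ≠ 0 := ne_of_gt hs_pos
  have hθ2 : θ / 2 = Real.pi / (4 * n) := by rw [hθdef]; ring
  have hnθ : (n:ℝ) * θ = Real.pi / 2 := by
    rw [hθdef]; field_simp
  set g : ℕ → ℝ := fun k =>
    (∑ l ∈ Finset.range (n-1), ((min k (l+1) : ℕ) : ℝ) * Real.sin (((l:ℝ)+1) * θ))
      + (k:ℝ)/2 with hgdef
  -- telescoping identity
  set f : ℕ → ℝ := fun i => -Real.cos (((i:ℝ) + 1/2)*θ)/(2*s) with hfdef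
  have htel : ∀ l : ℕ, Real.sin (((l:ℝ)+1)*θ) = f (l+1) - f l := by
    intro l
    have hx : ((((l:ℝ)+1/2)*θ) + (((l:ℝ)+1+1/2)*θ))/2 = ((l:ℝ)+1)*θ := by ring
    have hy : ((((l:ℝ)+1/2)*θ) - (((l:ℝ)+1+1/2)*θ))/2 = -(θ/2) := by ring
    have h := Real.cos_sub_cos (((l:ℝ)+1/2)*θ) (((l:ℝ)+1+1/2)*θ)
    rw [hx, hy, Real.sin_neg, hθ2, ← hsdef] at h
    rw [hfdef]
    simp only []
    push_cast
    set a := Real.sin (((l:ℝ)+1)*θ) with ha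
    set b := Real.cos (((l:ℝ)+1/2)*θ) with hb
    set c := Real.cos (((l:ℝ)+1+1/2)*θ) with hc
    field_simp
    linear_combination (-1) * h
  have hsinθ : Real.sin θ = 2 * s * Real.cos (θ/2) := by
    have h2 : (2:ℝ) * (θ/2) = θ := by ring
    calc Real.sin θ = Real.sin (2*(θ/2)) := by rw [h2]
      _ = 2 * Real.sin (θ/2) * Real.cos (θ/2) := Real.sin_two_mul _
      _ = 2 * s * Real.cos (θ/2) := by rw [hθ2]
  -- base case 1
  have hg1 : g 1 = 1/(4*s^2) * Real.sin (((1:ℕ):ℝ)*θ) := by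
    have hsum : ∑ l ∈ Finset.range (n-1), ((min 1 (l+1) : ℕ) : ℝ) * Real.sin (((l:ℝ)+1) * θ)
        = f (n-1) - f 0 := by
      rw [← Finset.sum_range_sub f (n-1)]
      apply Finset.sum_congr rfl
      intro l _
      have hm : (min 1 (l+1) : ℕ) = 1 := by omega
      rw [hm, Nat.cast_one, one_mul]
      exact htel l
    have hcast : ((n-1:ℕ):ℝ) = (n:ℝ) - 1 := by
      rw [Nat.cast_sub hn]; simp
    have hfn : f (n-1) = -s/(2*s) := by
      rw [hfdef]
      simp only []
      rw [hcast]
      have harg : (((n:ℝ) - 1) + 1/2)*θ = Real.pi/2 - θ/2 := by rw [← hnθ]; ring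
      rw [harg, Real.cos_pi_div_two_sub, hθ2]
    have hf0 : f 0 = -Real.cos (θ/2)/(2*s) := by
      rw [hfdef]
      simp only []
      have h0 : (((0:ℕ):ℝ) + 1/2)*θ = θ/2 := by push_cast; ring
      rw [h0]
    rw [hgdef]
    simp only []
    rw [hsum, hfn, hf0]
    rw [Nat.cast_one, one_mul, hsinθ]
    field_simp
    ring
  -- main induction
  have key : ∀ k, k ≤ n → g k = 1/(4*s^2) * Real.sin (((k:ℕ):ℝ)*θ) := by
    intro k
    induction k using Nat.strong_induction_on with
    | _ k ih =>
      match k, ih with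
      | 0, _ =>
        intro _
        rw [hgdef]
        simp only []
        rw [Finset.sum_eq_zero (fun l _ => by simp)]
        simp
      | 1, _ =>
        intro _
        exact hg1
      | (k+2), ih =>
        intro hk
        have h1 := ih (k+1) (by omega) (by omega)
        have h0 := ih k (by omega) (by omega)
        have hkmem : k ∈ Finset.range (n-1) := by
          simp only [Finset.mem_range]; omega
        -- recurrence
        have hrec : g (k+2) = 2 * g (k+1) - g k - Real.sin (((k:ℝ)+1)*θ) := by
          have hpt : ∀ l ∈ Finset.range (n-1),
              ((min (k+2) (l+1) : ℕ) : ℝ) * Real.sin (((l:ℝ)+1) * θ)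
              = (2*((min (k+1) (l+1) : ℕ):ℝ) * Real.sin (((l:ℝ)+1) * θ)
                 - ((min k (l+1) : ℕ):ℝ) * Real.sin (((l:ℝ)+1) * θ)
                 - (if l = k then Real.sin (((l:ℝ)+1) * θ) else 0)) := by
            intro l _
            by_cases hlk : l = k
            · subst hlk
              rw [if_pos rfl]
              rw [Nat.min_eq_right (by omega : l+1 ≤ l+2), Nat.min_eq_right (le_refl (l+1)),
                  Nat.min_eq_left (by omega : l ≤ l+1)]
              push_cast
              ring
            · rw [if_neg hlk]
              rcases Nat.lt_or_ge l k with h | h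
              · rw [Nat.min_eq_right (by omega), Nat.min_eq_right (by omega),
                    Nat.min_eq_right (by omega)]
                ring
              · have hge : l + 1 ≥ k + 2 := by omega
                rw [Nat.min_eq_left (by omega), Nat.min_eq_left (by omega),
                    Nat.min_eq_left (by omega)]
                push_cast
                ring
          have hsum2 : ∑ l ∈ Finset.range (n-1), ((min (k+2) (l+1) : ℕ) : ℝ) * Real.sin (((l:ℝ)+1) * θ)
              = 2 * (∑ l ∈ Finset.range (n-1), ((min (k+1) (l+1) : ℕ):ℝ) * Real.sin (((l:ℝ)+1) * θ))
                - (∑ l ∈ Finset.range (n-1), ((min k (l+1) : ℕ):ℝ) * Real.sin (((l:ℝ)+1) * θ))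
                - Real.sin (((k:ℝ)+1)*θ) := by
            rw [Finset.sum_congr rfl hpt]
            rw [Finset.sum_sub_distrib, Finset.sum_sub_distrib, Finset.sum_ite_eq' _ k, if_pos hkmem,
                Finset.mul_sum]
            simp only [mul_assoc]
          rw [hgdef]
          simp only []
          rw [hsum2]
          push_cast
          ring
        rw [hrec, h1, h0]
        -- trig identity
        have hcosθ : Real.cos θ = 1 - 2*s^2 := by
          have h2 : (2:ℝ) * (θ/2) = θ := by ring
          calc Real.cos θ = Real.cos (2*(θ/2)) := by rw [h2]
            _ = 2 * Real.cos (θ/2)^2 - 1 := Real.cos_two_mul _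
            _ = 2 * (1 - Real.sin (θ/2)^2) - 1 := by rw [Real.cos_sq']
            _ = 1 - 2*s^2 := by rw [hθ2]; ring
        have hadd : Real.sin (((k:ℝ)+2)*θ) + Real.sin ((k:ℝ)*θ)
            = 2 * Real.sin (((k:ℝ)+1)*θ) * Real.cos θ := by
          have e2 : ((k:ℝ)+2)*θ = ((k:ℝ)+1)*θ + θ := by ring
          have e0 : (k:ℝ)*θ = ((k:ℝ)+1)*θ - θ := by ring
          rw [e2, e0, Real.sin_add, Real.sin_sub]
          ring
        push_cast
        rw [hcosθ] at hadd
        have hS2 : Real.sin (((k:ℝ)+2)*θ)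
            = 2*Real.sin (((k:ℝ)+1)*θ)*(1-2*s^2) - Real.sin ((k:ℝ)*θ) := by linarith
        rw [hS2]
        field_simp
        ring
  -- conclude
  funext j
  have hj1 : (j:ℕ) + 1 ≤ n := j.isLt
  have hterm : ∀ l : Fin n, M j l * v l =
      (fun m : ℕ => (if m + 1 ≤ n - 1 then ((min ((j:ℕ)+1) (m+1) : ℕ):ℝ) else ((j:ℕ)+1:ℝ)/2)
        * Real.sin (((m:ℝ)+1) * θ)) (l:ℕ) := by
    intro l
    rw [hM, hv]
    simp only []
    have harg : (((l:ℕ)+1:ℕ):ℝ) * Real.pi / (2*(n:ℝ)) = (((l:ℕ):ℝ)+1) * θ := by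
      rw [hθdef]; push_cast; ring
    rw [harg]
    congr 1
    split
    · push_cast; ring
    · rfl
  have hmv : M.mulVec v j = g ((j:ℕ)+1) := by
    rw [Matrix.mulVec, dotProduct]
    rw [Finset.sum_congr rfl (fun l _ => hterm l)]
    rw [Fin.sum_univ_eq_sum_range (fun m : ℕ =>
      (if m + 1 ≤ n - 1 then ((min ((j:ℕ)+1) (m+1) : ℕ):ℝ) else ((j:ℕ)+1:ℝ)/2)
        * Real.sin (((m:ℝ)+1) * θ)) n]
    have hsplit : Finset.range n = Finset.range ((n-1) + 1) := by
      congr 1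
      omega
    rw [hsplit, Finset.sum_range_succ]
    have hlast : ¬ ((n-1) + 1 ≤ n - 1) := by omega
    rw [if_neg hlast]
    have hsinn : Real.sin ((((n-1:ℕ):ℝ)+1) * θ) = 1 := by
      have : (((n-1:ℕ):ℝ)+1) * θ = Real.pi / 2 := by
        rw [← hnθ, Nat.cast_sub hn]; push_cast; ring
      rw [this, Real.sin_pi_div_two]
    rw [hsinn, mul_one]
    rw [hgdef]
    simp only []
    congr 1
    · apply Finset.sum_congr rfl
      intro l hl
      rw [Finset.mem_range] at hl
      rw [if_pos (by omega)]
    · push_cast; ring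
  rw [hmv, key ((j:ℕ)+1) hj1]
  simp only [Pi.smul_apply, smul_eq_mul]
  rw [hv]
  congr 2
  rw [hθdef]
  push_cast
  ring
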